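/- The derivative in σ of g(σ) = E_{z∼N(0,1)}[Φ(ε + σz) - Φ(σz)] equals E_{z∼N(0,1)}[z·φ(ε + σz)], where φ is the standard normal density, and this quantity is nonpositive for all ε ≥ 0 and σ > 0. -/

import Mathlib

open MeasureTheory ProbabilityTheory

/-- Standard normal pdf. -/
noncomputable def stdphi (t : ℝ) : ℝ := Real.exp (-t ^ 2 / 2) / Real.sqrt (2 * Real.pi)

/-- Standard normal CDF. -/
noncomputable def stdPhi (t : ℝ) : ℝ := ∫ u in Set.Iic t, stdphi u

open Real Set

lemma stdphi_cont : Continuous stdphi := by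
  unfold stdphi
  fun_prop

lemma stdphi_nonneg (t : ℝ) : 0 ≤ stdphi t :=
  div_nonneg (Real.exp_nonneg _) (Real.sqrt_nonneg _)

lemma sqrt_two_pi_pos : (0:ℝ) < Real.sqrt (2 * Real.pi) := by
  positivity

lemma stdphi_le_one (t : ℝ) : stdphi t ≤ 1 := by
  unfold stdphi
  rw [div_le_one sqrt_two_pi_pos]
  calc Real.exp (-t ^ 2 / 2) ≤ 1 := by
        rw [Real.exp_le_one_iff]; nlinarith [sq_nonneg t]
    _ ≤ Real.sqrt (2 * Real.pi) := by
        rw [show (1:ℝ) = Real.sqrt 1 by simp]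
        exact Real.sqrt_le_sqrt (by nlinarith [Real.pi_gt_three])

lemma stdphi_integrable : Integrable stdphi := by
  unfold stdphi
  have : Integrable (fun t : ℝ => Real.exp (-(1/2) * t ^ 2)) := integrable_exp_neg_mul_sq (by norm_num)
  simpa [div_eq_mul_inv, neg_div, mul_comm] using this.mul_const (Real.sqrt (2 * Real.pi))⁻¹

lemma stdPhi_eq (t : ℝ) : stdPhi t = (∫ u in (0:ℝ)..t, stdphi u) + stdPhi 0 := by
  rw [← intervalIntegral.integral_Iic_sub_Iic stdphi_integrable.integrableOn
    stdphi_integrable.integrableOn]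
  unfold stdPhi; ring

lemma hasDerivAt_stdPhi (t : ℝ) : HasDerivAt stdPhi (stdphi t) t := by
  have h : HasDerivAt (fun x => (∫ u in (0:ℝ)..x, stdphi u) + stdPhi 0) (stdphi t) t := by
    refine HasDerivAt.add_const _ ?_
    exact intervalIntegral.integral_hasDerivAt_right
      (stdphi_integrable.intervalIntegrable)
      (stdphi_cont.stronglyMeasurableAtFilter _ _)
      stdphi_cont.continuousAt
  have : stdPhi = fun x => (∫ u in (0:ℝ)..x, stdphi u) + stdPhi 0 := funext stdPhi_eq
  rw [this]; exact h

lemma stdPhi_abs_le (t : ℝ) : |stdPhi t| ≤ ∫ u, stdphi u := by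
  unfold stdPhi
  rw [abs_of_nonneg (integral_nonneg fun u => stdphi_nonneg u)]
  exact setIntegral_le_integral stdphi_integrable (Filter.Eventually.of_forall stdphi_nonneg)

lemma gauss_map_neg : (gaussianReal 0 1).map (fun z : ℝ => -z) = gaussianReal 0 1 := by
  have := gaussianReal_map_const_mul (μ := 0) (v := 1) (-1)
  simp only [neg_one_mul, mul_zero] at this
  convert this using 2
  all_goals norm_num

lemma integral_neg_gauss (f : ℝ → ℝ) (hf : AEStronglyMeasurable f (gaussianReal 0 1)) :
    ∫ z, f (-z) ∂(gaussianReal 0 1) = ∫ z, f z ∂(gaussianReal 0 1) := by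
  conv_rhs => rw [← gauss_map_neg]
  rw [integral_map (by fun_prop) (by rwa [gauss_map_neg])]

lemma integrable_abs_gauss : Integrable (fun z : ℝ => |z|) (gaussianReal 0 1) := by
  have h1 : (gaussianReal 0 1) = volume.withDensity (gaussianPDF 0 1) :=
    gaussianReal_of_var_ne_zero 0 one_ne_zero
  rw [h1, integrable_withDensity_iff (measurable_gaussianPDF 0 1)
    (Filter.Eventually.of_forall fun x => ENNReal.ofReal_lt_top)]
  have h2 : Integrable (fun x : ℝ => x * Real.exp (-(1/2) * x ^ 2)) :=
    integrable_mul_exp_neg_mul_sq (by norm_num)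
  apply (h2.abs.mul_const ((Real.sqrt (2 * Real.pi))⁻¹)).mono'
    ((measurable_norm.mul ((measurable_gaussianPDF 0 1).ennreal_toReal)).aestronglyMeasurable)
  filter_upwards with x
  simp only [gaussianPDF, gaussianPDFReal, Pi.mul_apply]
  rw [ENNReal.toReal_ofReal (by positivity)]
  rw [Real.norm_eq_abs, abs_of_nonneg (by positivity), abs_mul,
    abs_of_nonneg (Real.exp_nonneg _)]
  have h4 : ((1:NNReal):ℝ) = 1 := rfl
  rw [h4]
  rw [Real.norm_eq_abs]
  apply le_of_eq
  ring

lemma stdphi_even (t : ℝ) : stdphi (-t) = stdphi t := by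
  unfold stdphi; rw [neg_pow]; norm_num

lemma integrable_zphi (c d : ℝ) :
    Integrable (fun z : ℝ => z * stdphi (c + d * z)) (gaussianReal 0 1) := by
  apply integrable_abs_gauss.mono'
    ((continuous_id.mul (stdphi_cont.comp (by continuity))).aestronglyMeasurable)
  filter_upwards with z
  rw [Real.norm_eq_abs, Pi.mul_apply, Function.comp_apply, id_eq, abs_mul]
  calc |z| * |stdphi (c + d * z)| ≤ |z| * 1 := by
        gcongr
        rw [abs_of_nonneg (stdphi_nonneg _)]
        exact stdphi_le_one _
    _ = |z| := mul_one _

lemma odd_int_eq_zero (σ : ℝ) :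
    ∫ z, z * stdphi (σ * z) ∂(gaussianReal 0 1) = 0 := by
  have h := integral_neg_gauss (fun z => z * stdphi (σ * z))
    ((continuous_id.mul (stdphi_cont.comp (by continuity))).aestronglyMeasurable)
  have h2 : ∀ z : ℝ, (-z) * stdphi (σ * (-z)) = -(z * stdphi (σ * z)) := by
    intro z
    rw [show σ * (-z) = -(σ * z) by ring, stdphi_even]; ring
  simp only [h2] at h
  rw [integral_neg] at h
  linarith

lemma pointwise_nonpos (ε σ : ℝ) (hε : 0 ≤ ε) (hσ : 0 < σ) (z : ℝ) :
    z * stdphi (ε + σ * z) + (-z) * stdphi (ε + σ * (-z)) ≤ 0 := by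
  have hpos := sqrt_two_pi_pos
  have key : z * (stdphi (ε + σ * z) - stdphi (ε - σ * z)) ≤ 0 := by
    rcases le_or_gt 0 z with hz | hz
    · have h1 : Real.exp (-(ε + σ * z) ^ 2 / 2) ≤ Real.exp (-(ε - σ * z) ^ 2 / 2) := by
        rw [Real.exp_le_exp]; nlinarith [mul_nonneg (mul_nonneg hε hσ.le) hz]
      have h2 : stdphi (ε + σ * z) - stdphi (ε - σ * z) ≤ 0 := by
        unfold stdphi
        rw [sub_nonpos, div_le_div_iff_of_pos_right hpos]
        exact h1
      exact mul_nonpos_of_nonneg_of_nonpos hz h2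
    · have h1 : Real.exp (-(ε - σ * z) ^ 2 / 2) ≤ Real.exp (-(ε + σ * z) ^ 2 / 2) := by
        rw [Real.exp_le_exp]; nlinarith [mul_nonneg (mul_nonneg hε hσ.le) (neg_nonneg.mpr hz.le)]
      have h2 : 0 ≤ stdphi (ε + σ * z) - stdphi (ε - σ * z) := by
        unfold stdphi
        rw [sub_nonneg, div_le_div_iff_of_pos_right hpos]
        exact h1
      exact mul_nonpos_of_nonpos_of_nonneg hz.le h2
  calc z * stdphi (ε + σ * z) + (-z) * stdphi (ε + σ * (-z))
      = z * (stdphi (ε + σ * z) - stdphi (ε - σ * z)) := by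
        rw [show ε + σ * (-z) = ε - σ * z by ring]; ring
    _ ≤ 0 := key

lemma int_nonpos (ε σ : ℝ) (hε : 0 ≤ ε) (hσ : 0 < σ) :
    (∫ z, z * stdphi (ε + σ * z) ∂(gaussianReal 0 1)) ≤ 0 := by
  have eqfun : (fun z : ℝ => (-z) * stdphi (ε + σ * (-z)))
      = fun z : ℝ => -(z * stdphi (ε + (-σ) * z)) := by
    funext z; rw [show ε + σ * (-z) = ε + (-σ) * z by ring]; ring
  have h := integral_neg_gauss (fun z => z * stdphi (ε + σ * z))
    ((continuous_id.mul (stdphi_cont.comp (by continuity))).aestronglyMeasurable)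
  have h2 : (∫ z, (z * stdphi (ε + σ * z) + (-z) * stdphi (ε + σ * (-z)))
      ∂(gaussianReal 0 1)) ≤ 0 :=
    integral_nonpos (pointwise_nonpos ε σ hε hσ)
  rw [integral_add (integrable_zphi ε σ)
    (by rw [eqfun]; exact (integrable_zphi ε (-σ)).neg), h] at h2
  linarith

lemma phi_diff_deriv (ε : ℝ) (z s : ℝ) :
    HasDerivAt (fun s : ℝ => stdPhi (ε + s * z) - stdPhi (s * z))
      (z * stdphi (ε + s * z) - z * stdphi (s * z)) s := by
  have h1 : HasDerivAt (fun s : ℝ => ε + s * z) z s :=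
    (hasDerivAt_mul_const z).const_add ε
  have h2 : HasDerivAt (fun s : ℝ => s * z) z s := hasDerivAt_mul_const z
  have H1 := (hasDerivAt_stdPhi (ε + s * z)).comp s h1
  have H2 := (hasDerivAt_stdPhi (s * z)).comp s h2
  rw [show z * stdphi (ε + s * z) - z * stdphi (s * z) = stdphi (ε + s * z) * z - stdphi (s * z) * z by ring]
  exact H1.sub H2

/-- The derivative in `σ` of `g(σ) = E_{z∼N(0,1)}[Φ(ε+σz) - Φ(σz)]` is
`E_{z∼N(0,1)}[z φ(ε+σz)]`, which is nonpositive for `ε ≥ 0`, `σ > 0`. -/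
theorem gauss_smoothing_deriv (ε : ℝ) (hε : 0 ≤ ε) (σ : ℝ) (hσ : 0 < σ) :
    HasDerivAt (fun s : ℝ => ∫ z, (stdPhi (ε + s * z) - stdPhi (s * z)) ∂(gaussianReal 0 1))
      (∫ z, z * stdphi (ε + σ * z) ∂(gaussianReal 0 1)) σ ∧
    (∫ z, z * stdphi (ε + σ * z) ∂(gaussianReal 0 1)) ≤ 0 := by
  refine ⟨?_, int_nonpos ε σ hε hσ⟩
  have stdPhi_cont : Continuous stdPhi := by
    have : Differentiable ℝ stdPhi := fun t => (hasDerivAt_stdPhi t).differentiableAt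
    exact this.continuous
  have key := hasDerivAt_integral_of_dominated_loc_of_deriv_le
    (F := fun s z => stdPhi (ε + s * z) - stdPhi (s * z))
    (F' := fun s z => z * stdphi (ε + s * z) - z * stdphi (s * z))
    (x₀ := σ) (bound := fun z => 2 * |z|) (μ := gaussianReal 0 1)
    (s := Metric.ball σ 1) (Metric.ball_mem_nhds σ one_pos)
    (Filter.Eventually.of_forall fun s =>
      (((stdPhi_cont.comp (by continuity)).sub
        (stdPhi_cont.comp (by continuity))).aestronglyMeasurable))
    ?_ ?_ ?_ ?_ ?_
  · have heq : (∫ z, (z * stdphi (ε + σ * z) - z * stdphi (σ * z)) ∂(gaussianReal 0 1))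
        = ∫ z, z * stdphi (ε + σ * z) ∂(gaussianReal 0 1) := by
      rw [integral_sub (integrable_zphi ε σ)
        (by simpa using integrable_zphi 0 σ), odd_int_eq_zero, sub_zero]
    rw [← heq]
    exact key.2
  · -- Integrable (F σ)
    apply (integrable_const (μ := gaussianReal 0 1) (2 * ∫ u, stdphi u)).mono'
      (((stdPhi_cont.comp (by continuity)).sub
        (stdPhi_cont.comp (by continuity))).aestronglyMeasurable)
    filter_upwards with z
    rw [Real.norm_eq_abs]
    calc |stdPhi (ε + σ * z) - stdPhi (σ * z)|
        ≤ |stdPhi (ε + σ * z)| + |stdPhi (σ * z)| := abs_sub _ _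
      _ ≤ (∫ u, stdphi u) + ∫ u, stdphi u := add_le_add (stdPhi_abs_le _) (stdPhi_abs_le _)
      _ = 2 * ∫ u, stdphi u := by ring
  · -- AEStronglyMeasurable (F' σ)
    exact ((continuous_id.mul (stdphi_cont.comp (by continuity))).sub
      (continuous_id.mul (stdphi_cont.comp (by continuity)))).aestronglyMeasurable
  · -- bound
    filter_upwards with z s _
    rw [Real.norm_eq_abs]
    calc |z * stdphi (ε + s * z) - z * stdphi (s * z)|
        ≤ |z * stdphi (ε + s * z)| + |z * stdphi (s * z)| := abs_sub _ _
      _ ≤ |z| * 1 + |z| * 1 := by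
          rw [abs_mul, abs_mul]
          gcongr <;>
            simp [abs_of_nonneg (stdphi_nonneg _), stdphi_le_one]
      _ = 2 * |z| := by ring
  · exact integrable_abs_gauss.const_mul 2
  · filter_upwards with z s _
    exact phi_diff_deriv ε z s
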